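/- (Abstract Matching Property for terms.) Let t_p be a pattern and t a concrete term matching it, so there is a substitution σ with σ(t_p) = t. Let t' be an abstract term with t ≺ t'. Then t' abstractly matches t_p with witness σ' such that dom(σ) = dom(σ'), σ(x) ≺ σ'(x) for all x ∈ dom(σ), and t ≺ σ'(t_p). -/

import Mathlib

namespace AbsRW

/-- Match types for pattern variables and `⋆` nodes. -/
inductive MatchType : Type where
  | Val : MatchType
  | NonVal : MatchType
  | All : MatchType
deriving DecidableEq

/-- Abstract terms `term⋆`: nonvalue nodes, value nodes, constants, pattern
variables, and abstract `⋆` nodes, each annotated with a match type.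
`S` is the type of symbols, `C` of constants, `V` of variables. -/
inductive TmS (S C V : Type) : Type where
  | nonval : S → List (TmS S C V) → TmS S C V
  | val : S → List (TmS S C V) → TmS S C V
  | const : C → TmS S C V
  | pvar : V → MatchType → TmS S C V
  | star : MatchType → TmS S C V

namespace TmS

variable {S C V : Type}

def isValRoot : TmS S C V → Prop
  | .val _ _ => True
  | .const _ => True
  | _ => False

def isNonvalRoot : TmS S C V → Prop
  | .nonval _ _ => True
  | _ => False

/-- Terms that match only values. -/
def isValLike : TmS S C V → Prop
  | .val _ _ => True
  | .const _ => True
  | .pvar _ .Val => True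
  | .star .Val => True
  | _ => False

/-- Terms that match only nonvalues. -/
def isNonvalLike : TmS S C V → Prop
  | .nonval _ _ => True
  | .pvar _ .NonVal => True
  | .star .NonVal => True
  | _ => False

/-- Whether a term may be the image of a variable with the given match type. -/
def mtOK : MatchType → TmS S C V → Prop
  | .All, _ => True
  | .Val, t => t.isValLike
  | .NonVal, t => t.isNonvalLike

/-- Applying a partial substitution to an abstract term (unbound variables
are left in place). -/
def subst (σ : V → Option (TmS S C V)) : TmS S C V → TmS S C V
  | .nonval s ts => .nonval s (ts.attach.map fun x => subst σ x.1)
  | .val s ts => .val s (ts.attach.map fun x => subst σ x.1)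
  | .const c => .const c
  | .pvar v mt => (σ v).getD (.pvar v mt)
  | .star mt => .star mt
  decreasing_by
    all_goals
      simp_wf
      have := List.sizeOf_lt_of_mem x.2
      omega

/-- Concrete terms: no variables and no `⋆` nodes. -/
inductive Concrete : TmS S C V → Prop where
  | nonval {s ts} : (∀ t ∈ ts, Concrete t) → Concrete (.nonval s ts)
  | val {s ts} : (∀ t ∈ ts, Concrete t) → Concrete (.val s ts)
  | const {c} : Concrete (.const c)

/-- Star-free terms (variables allowed). -/
inductive StarFree : TmS S C V → Prop where
  | nonval {s ts} : (∀ t ∈ ts, StarFree t) → StarFree (.nonval s ts)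
  | val {s ts} : (∀ t ∈ ts, StarFree t) → StarFree (.val s ts)
  | const {c} : StarFree (.const c)
  | pvar {v mt} : StarFree (.pvar v mt)

/-- `OccMT p v mt`: variable `v` occurs in `p` with match type `mt`. -/
inductive OccMT : TmS S C V → V → MatchType → Prop where
  | pvar {v mt} : OccMT (.pvar v mt) v mt
  | nonval {s ts t v mt} : t ∈ ts → OccMT t v mt → OccMT (.nonval s ts) v mt
  | val {s ts t v mt} : t ∈ ts → OccMT t v mt → OccMT (.val s ts) v mt

/-- `OccNV t N n`: a nonvalue node with symbol `N` and arity `n` occurs in `t`. -/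
inductive OccNV : TmS S C V → S → ℕ → Prop where
  | here {N ts} : OccNV (.nonval N ts) N ts.length
  | nonval {s0 ts t N n} : t ∈ ts → OccNV t N n → OccNV (.nonval s0 ts) N n
  | val {s0 ts t N n} : t ∈ ts → OccNV t N n → OccNV (.val s0 ts) N n

/-- The ordering `≺` on abstract terms: the reflexive, transitive, congruent
closure of `nonval(s,t̄) ≺ ⋆_NonVal`, `val(s,t̄) ≺ ⋆_Val`, `t ≺ ⋆_All`. -/
inductive Prec : TmS S C V → TmS S C V → Prop where
  | refl {t} : Prec t t
  | trans {a b c} : Prec a b → Prec b c → Prec a c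
  | nonvalCongr {s ts ts'} : ts.length = ts'.length →
      (∀ p ∈ ts.zip ts', Prec p.1 p.2) → Prec (.nonval s ts) (.nonval s ts')
  | valCongr {s ts ts'} : ts.length = ts'.length →
      (∀ p ∈ ts.zip ts', Prec p.1 p.2) → Prec (.val s ts) (.val s ts')
  | starNonVal {s ts} : Prec (.nonval s ts) (.star .NonVal)
  | starVal {s ts} : Prec (.val s ts) (.star .Val)
  | starAll {t} : Prec t (.star .All)

/-- The extended ordering `≺` on terms with variables: `Prec` extended with the
subsumption ordering (a substitution instance is below the pattern) and
`x_mt ≺ ⋆_mt`. -/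
inductive PrecV : TmS S C V → TmS S C V → Prop where
  | refl {t} : PrecV t t
  | trans {a b c} : PrecV a b → PrecV b c → PrecV a c
  | nonvalCongr {s ts ts'} : ts.length = ts'.length →
      (∀ p ∈ ts.zip ts', PrecV p.1 p.2) → PrecV (.nonval s ts) (.nonval s ts')
  | valCongr {s ts ts'} : ts.length = ts'.length →
      (∀ p ∈ ts.zip ts', PrecV p.1 p.2) → PrecV (.val s ts) (.val s ts')
  | starNonVal {s ts} : PrecV (.nonval s ts) (.star .NonVal)
  | starVal {s ts} : PrecV (.val s ts) (.star .Val)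
  | starAll {t} : PrecV t (.star .All)
  | subsum (σ : V → Option (TmS S C V)) (t : TmS S C V) : PrecV (t.subst σ) t
  | varStar {v mt} : PrecV (.pvar v mt) (.star mt)

/-- A maximal element of the ordering `≺` (a "top" abstract reduction state). -/
def IsTop (t : TmS S C V) : Prop := ∀ u : TmS S C V, Prec u t

end TmS

/-- Least upper bound with respect to `≺`. -/
def IsLubT {S C V : Type} (A : Set (TmS S C V)) (u : TmS S C V) : Prop :=
  (∀ x ∈ A, TmS.Prec x u) ∧ ∀ w, (∀ x ∈ A, TmS.Prec x w) → TmS.Prec u w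

/-- Optional least upper bound: `none` exactly when the set is empty. -/
def OptIsLubT {S C V : Type} (A : Set (TmS S C V)) (o : Option (TmS S C V)) : Prop :=
  (A = ∅ ∧ o = none) ∨ ∃ u, o = some u ∧ IsLubT A u

/-- A partial substitution respects match types on the occurrences `occ`. -/
def MTOkO {S C V : Type} (σ : V → Option (TmS S C V)) (occ : V → MatchType → Prop) : Prop :=
  ∀ v mt t, occ v mt → σ v = some t → TmS.mtOK mt t

/-- Abstract configurations: a term together with a reduction state. -/
structure ConfS (S C V : Type) : Type where
  tm : TmS S C V
  st : TmS S C V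

namespace ConfS

variable {S C V : Type}

def subst (σ : V → Option (TmS S C V)) (c : ConfS S C V) : ConfS S C V :=
  ⟨c.tm.subst σ, c.st.subst σ⟩

def OccMT (c : ConfS S C V) (v : V) (mt : MatchType) : Prop :=
  c.tm.OccMT v mt ∨ c.st.OccMT v mt

def OccNV (c : ConfS S C V) (N : S) (n : ℕ) : Prop :=
  c.tm.OccNV N n ∨ c.st.OccNV N n

def Concrete (c : ConfS S C V) : Prop := c.tm.Concrete ∧ c.st.Concrete

def StarFree (c : ConfS S C V) : Prop := c.tm.StarFree ∧ c.st.StarFree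

def Prec (c c' : ConfS S C V) : Prop := c.tm.Prec c'.tm ∧ c.st.Prec c'.st

def PrecV (c c' : ConfS S C V) : Prop := c.tm.PrecV c'.tm ∧ c.st.PrecV c'.st

end ConfS

/-- Right-hand sides of SOS rules (carried inside frames). -/
inductive RhsS (S C V F : Type) : Type where
  | build : ConfS S C V → RhsS S C V F
  | letStep : ConfS S C V → ConfS S C V → RhsS S C V F → RhsS S C V F
  | letSem : ConfS S C V → F → List (ConfS S C V) → RhsS S C V F → RhsS S C V F

namespace RhsS

variable {S C V F : Type}

def subst (σ : V → Option (TmS S C V)) : RhsS S C V F → RhsS S C V F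
  | .build c => .build (c.subst σ)
  | .letStep c1 c2 r => .letStep (c1.subst σ) (c2.subst σ) (r.subst σ)
  | .letSem c f args r => .letSem (c.subst σ) f (args.map (ConfS.subst σ)) (r.subst σ)

def OccMT : RhsS S C V F → V → MatchType → Prop
  | .build c => c.OccMT
  | .letStep c1 c2 r => fun v mt => c1.OccMT v mt ∨ c2.OccMT v mt ∨ r.OccMT v mt
  | .letSem c _ args r => fun v mt =>
      c.OccMT v mt ∨ (∃ a ∈ args, ConfS.OccMT a v mt) ∨ r.OccMT v mt

def OccNV : RhsS S C V F → S → ℕ → Prop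
  | .build c => fun N n => c.OccNV N n
  | .letStep c1 c2 r => fun N n => c1.OccNV N n ∨ c2.OccNV N n ∨ r.OccNV N n
  | .letSem c _ args r => fun N n =>
      c.OccNV N n ∨ (∃ a ∈ args, ConfS.OccNV a N n) ∨ r.OccNV N n

def StarFree : RhsS S C V F → Prop
  | .build c => c.StarFree
  | .letStep c1 c2 r => c1.StarFree ∧ c2.StarFree ∧ r.StarFree
  | .letSem c _ args r => c.StarFree ∧ (∀ a ∈ args, ConfS.StarFree a) ∧ r.StarFree

/-- Congruent lift of `≺` to rule right-hand sides. -/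
inductive PrecR : RhsS S C V F → RhsS S C V F → Prop where
  | build {c c'} : c.Prec c' → PrecR (.build c) (.build c')
  | letStep {c1 c1' c2 c2' r r'} : c1.Prec c1' → c2.Prec c2' → PrecR r r' →
      PrecR (.letStep c1 c2 r) (.letStep c1' c2' r')
  | letSem {c c' f args args' r r'} : c.Prec c' → args.length = args'.length →
      (∀ p ∈ args.zip args', ConfS.Prec p.1 p.2) → PrecR r r' →
      PrecR (.letSem c f args r) (.letSem c' f args' r')

/-- Congruent lift of the extended ordering to rule right-hand sides. -/
inductive PrecVR : RhsS S C V F → RhsS S C V F → Prop where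
  | build {c c'} : c.PrecV c' → PrecVR (.build c) (.build c')
  | letStep {c1 c1' c2 c2' r r'} : c1.PrecV c1' → c2.PrecV c2' → PrecVR r r' →
      PrecVR (.letStep c1 c2 r) (.letStep c1' c2' r')
  | letSem {c c' f args args' r r'} : c.PrecV c' → args.length = args'.length →
      (∀ p ∈ args.zip args', ConfS.PrecV p.1 p.2) → PrecVR r r' →
      PrecVR (.letSem c f args r) (.letSem c' f args' r')

end RhsS

/-- A frame `[c → rhs]` of a context. -/
structure FrameS (S C V F : Type) : Type where
  pat : ConfS S C V
  rhs : RhsS S C V F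

namespace FrameS

variable {S C V F : Type}

def subst (σ : V → Option (TmS S C V)) (f : FrameS S C V F) : FrameS S C V F :=
  ⟨f.pat.subst σ, f.rhs.subst σ⟩

def OccMT (f : FrameS S C V F) (v : V) (mt : MatchType) : Prop :=
  f.pat.OccMT v mt ∨ f.rhs.OccMT v mt

def OccNV (f : FrameS S C V F) (N : S) (n : ℕ) : Prop :=
  f.pat.OccNV N n ∨ f.rhs.OccNV N n

def StarFree (f : FrameS S C V F) : Prop := f.pat.StarFree ∧ f.rhs.StarFree

def Prec (f f' : FrameS S C V F) : Prop := f.pat.Prec f'.pat ∧ RhsS.PrecR f.rhs f'.rhs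

def PrecV (f f' : FrameS S C V F) : Prop := f.pat.PrecV f'.pat ∧ RhsS.PrecVR f.rhs f'.rhs

end FrameS

/-- Contexts: stacks of frames ending in `emp` or a context variable.
`K` is the type of context variables. -/
inductive CtxS (S C V K F : Type) : Type where
  | emp : CtxS S C V K F
  | kvar : K → CtxS S C V K F
  | push : CtxS S C V K F → FrameS S C V F → CtxS S C V K F

/-- A substitution: an assignment to term variables and to context variables. -/
structure PSubstS (S C V K F : Type) : Type where
  tm : V → Option (TmS S C V)
  kv : K → Option (CtxS S C V K F)

namespace CtxS

variable {S C V K F : Type}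

def subst (θ : PSubstS S C V K F) : CtxS S C V K F → CtxS S C V K F
  | .emp => .emp
  | .kvar k => (θ.kv k).getD (.kvar k)
  | .push Kc f => .push (Kc.subst θ) (f.subst θ.tm)

def OccMT : CtxS S C V K F → V → MatchType → Prop
  | .emp => fun _ _ => False
  | .kvar _ => fun _ _ => False
  | .push Kc f => fun v mt => Kc.OccMT v mt ∨ f.OccMT v mt

def OccK : CtxS S C V K F → K → Prop
  | .emp => fun _ => False
  | .kvar k => fun k' => k = k'
  | .push Kc _ => fun k' => Kc.OccK k'

def OccNV : CtxS S C V K F → S → ℕ → Prop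
  | .emp => fun _ _ => False
  | .kvar _ => fun _ _ => False
  | .push Kc f => fun N n => Kc.OccNV N n ∨ f.OccNV N n

/-- Stack length: the number of frames of a context. -/
def len : CtxS S C V K F → ℕ
  | .emp => 0
  | .kvar _ => 0
  | .push Kc _ => Kc.len + 1

/-- Concrete contexts: ending in `emp`, with star-free frames. -/
inductive Conc : CtxS S C V K F → Prop where
  | emp : Conc .emp
  | push {Kc f} : Conc Kc → f.StarFree → Conc (.push Kc f)

/-- Congruent lift of `≺` to contexts. -/
inductive Prec : CtxS S C V K F → CtxS S C V K F → Prop where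
  | emp : Prec .emp .emp
  | kvar {k} : Prec (.kvar k) (.kvar k)
  | push {Kc Kc' f f'} : Prec Kc Kc' → f.Prec f' → Prec (.push Kc f) (.push Kc' f')

/-- Congruent lift of the extended ordering to contexts. -/
inductive PrecV : CtxS S C V K F → CtxS S C V K F → Prop where
  | emp : PrecV .emp .emp
  | kvar {k} : PrecV (.kvar k) (.kvar k)
  | push {Kc Kc' f f'} : PrecV Kc Kc' → f.PrecV f' → PrecV (.push Kc f) (.push Kc' f')

/-- `Subctx K' K`: `K'` is a subcontext (a tail) of `K`. -/
inductive Subctx : CtxS S C V K F → CtxS S C V K F → Prop where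
  | refl {Kc} : Subctx Kc Kc
  | push {K' Kc f} : Subctx K' Kc → Subctx K' (.push Kc f)

end CtxS

/-- Least upper bound of a set of contexts with respect to `≺`. -/
def IsLubK {S C V K F : Type} (A : Set (CtxS S C V K F)) (u : CtxS S C V K F) : Prop :=
  (∀ x ∈ A, CtxS.Prec x u) ∧ ∀ w, (∀ x ∈ A, CtxS.Prec x w) → CtxS.Prec u w

def OptIsLubK {S C V K F : Type} (A : Set (CtxS S C V K F))
    (o : Option (CtxS S C V K F)) : Prop :=
  (A = ∅ ∧ o = none) ∨ ∃ u, o = some u ∧ IsLubK A u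

/-- An abstract machine state `⟨c | K⟩`. -/
structure AStateS (S C V K F : Type) : Type where
  conf : ConfS S C V
  ctx : CtxS S C V K F

namespace AStateS

variable {S C V K F : Type}

def subst (θ : PSubstS S C V K F) (s : AStateS S C V K F) : AStateS S C V K F :=
  ⟨s.conf.subst θ.tm, s.ctx.subst θ⟩

def OccMT (s : AStateS S C V K F) (v : V) (mt : MatchType) : Prop :=
  s.conf.OccMT v mt ∨ s.ctx.OccMT v mt

def OccK (s : AStateS S C V K F) (k : K) : Prop := s.ctx.OccK k

def OccNV (s : AStateS S C V K F) (N : S) (n : ℕ) : Prop :=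
  s.conf.OccNV N n ∨ s.ctx.OccNV N n

def Concrete (s : AStateS S C V K F) : Prop := s.conf.Concrete ∧ s.ctx.Conc

def Prec (s s' : AStateS S C V K F) : Prop := s.conf.Prec s'.conf ∧ s.ctx.Prec s'.ctx

/-- Stack length of a state. -/
def stacklen (s : AStateS S C V K F) : ℕ := s.ctx.len

end AStateS

/-- The extended ordering `≺` (with subsumption) lifted to states. -/
inductive PrecVState {S C V K F : Type} : AStateS S C V K F → AStateS S C V K F → Prop where
  | lift {c c' Kc Kc'} : ConfS.PrecV c c' → CtxS.PrecV Kc Kc' →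
      PrecVState ⟨c, Kc⟩ ⟨c', Kc'⟩
  | subsum (θ : PSubstS S C V K F) (s : AStateS S C V K F) : PrecVState (s.subst θ) s
  | trans {a b c} : PrecVState a b → PrecVState b c → PrecVState a c

/-- Right-hand sides of abstract machine rules. -/
inductive AmRhsS (S C V K F : Type) : Type where
  | ret : ConfS S C V → CtxS S C V K F → AmRhsS S C V K F
  | letSem : ConfS S C V → F → List (ConfS S C V) → AmRhsS S C V K F → AmRhsS S C V K F

/-- An abstract machine rule. -/
structure AmRuleS (S C V K F : Type) : Type where
  lhs : AStateS S C V K F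
  rhs : AmRhsS S C V K F

/-- An abstract machine: a set of rules together with the (concrete) semantic
functions of the language.  Semantic functions produce only concrete values,
finitely many for each input. -/
structure MachineS (S C V K F : Type) : Type 1 where
  rules : Set (AmRuleS S C V K F)
  sem : F → List (ConfS S C V) → ConfS S C V → Prop
  sem_values : ∀ f args r, sem f args r →
    ((∀ c ∈ args, ConfS.Concrete c ∧ c.tm.isValRoot) ∧ ConfS.Concrete r ∧ r.tm.isValRoot)
  sem_finite : ∀ f args, Set.Finite {r | sem f args r}

/-- Executing the right-hand side of an AM rule concretely. -/
inductive ExecConcRhs {S C V K F : Type} (M : MachineS S C V K F)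
    (θ : PSubstS S C V K F) : AmRhsS S C V K F → AStateS S C V K F → Prop where
  | ret {c Kp} : ExecConcRhs M θ (.ret c Kp) ⟨ConfS.subst θ.tm c, CtxS.subst θ Kp⟩
  | letSem {cret f args rest rr s} : M.sem f (args.map (ConfS.subst θ.tm)) rr →
      ConfS.subst θ.tm cret = rr → MTOkO θ.tm cret.OccMT → ExecConcRhs M θ rest s →
      ExecConcRhs M θ (.letSem cret f args rest) s

/-- One concrete step of the abstract machine by a particular rule. -/
def ConcStepBy {S C V K F : Type} (M : MachineS S C V K F) (ru : AmRuleS S C V K F)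
    (s s' : AStateS S C V K F) : Prop :=
  ∃ θ : PSubstS S C V K F,
    AStateS.subst θ ru.lhs = s ∧ MTOkO θ.tm ru.lhs.OccMT ∧
    ExecConcRhs M θ ru.rhs s'

/-- One concrete step of the abstract machine, `s → s'`. -/
def ConcStep {S C V K F : Type} (M : MachineS S C V K F)
    (s s' : AStateS S C V K F) : Prop :=
  ∃ ru ∈ M.rules, ConcStepBy M ru s s'

/-! ### Abstract matching -/

/-- A substitution concretely matches a term pattern against a concrete term,
with domain exactly the variables of the pattern. -/
def ConcMatchTm {S C V : Type} (σ : V → Option (TmS S C V)) (p t : TmS S C V) : Prop :=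
  TmS.subst σ p = t ∧ MTOkO σ p.OccMT ∧
  (∀ v, (σ v).isSome ↔ ∃ mt, p.OccMT v mt) ∧ t.Concrete

/-- `σA` is the witness of abstractly matching the pattern `p` against the
abstract term `tA`: `p` matches some concretization of `tA`, and `σA` is the
pointwise least upper bound of all concrete matchers. -/
def AbsWitnessTm {S C V : Type} (p tA : TmS S C V) (σA : V → Option (TmS S C V)) : Prop :=
  (∃ t σ, TmS.Prec t tA ∧ ConcMatchTm σ p t) ∧
  ∀ v, OptIsLubT {u | ∃ t σ, TmS.Prec t tA ∧ ConcMatchTm σ p t ∧ σ v = some u} (σA v)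

/-- Concrete matching of a configuration pattern. -/
def ConcMatchConf {S C V : Type} (σ : V → Option (TmS S C V)) (p c : ConfS S C V) : Prop :=
  ConfS.subst σ p = c ∧ MTOkO σ p.OccMT ∧
  (∀ v, (σ v).isSome ↔ ∃ mt, p.OccMT v mt) ∧ c.Concrete

/-- Witness of abstractly matching a configuration pattern against an abstract
configuration. -/
def AbsWitnessConf {S C V : Type} (p cA : ConfS S C V) (σA : V → Option (TmS S C V)) : Prop :=
  (∃ c σ, ConfS.Prec c cA ∧ ConcMatchConf σ p c) ∧
  ∀ v, OptIsLubT {u | ∃ c σ, ConfS.Prec c cA ∧ ConcMatchConf σ p c ∧ σ v = some u} (σA v)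

/-- Concrete matching of a state pattern against a concrete machine state,
with domain exactly the variables of the pattern. -/
def ConcMatchState {S C V K F : Type} (θ : PSubstS S C V K F)
    (p s : AStateS S C V K F) : Prop :=
  AStateS.subst θ p = s ∧ MTOkO θ.tm p.OccMT ∧
  (∀ v, (θ.tm v).isSome ↔ ∃ mt, p.OccMT v mt) ∧
  (∀ k, (θ.kv k).isSome ↔ p.OccK k) ∧
  s.Concrete

/-- Witness of abstractly matching a state pattern against an abstract state. -/
def AbsWitnessState {S C V K F : Type} (p sA : AStateS S C V K F)
    (θA : PSubstS S C V K F) : Prop :=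
  (∃ s θ, AStateS.Prec s sA ∧ ConcMatchState θ p s) ∧
  (∀ v, OptIsLubT {u | ∃ s θ, AStateS.Prec s sA ∧ ConcMatchState θ p s ∧ θ.tm v = some u}
      (θA.tm v)) ∧
  (∀ k, OptIsLubK {Kc | ∃ s θ, AStateS.Prec s sA ∧ ConcMatchState θ p s ∧ θ.kv k = some Kc}
      (θA.kv k))

/-! ### Abstract rewriting -/

/-- Combine two partial substitutions, preferring the first. -/
def combineO {S C V : Type} (σ τ : V → Option (TmS S C V)) : V → Option (TmS S C V) :=
  fun v => (σ v).orElse fun _ => τ v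

def PSubstS.combine {S C V K F : Type} (θ : PSubstS S C V K F)
    (τ : V → Option (TmS S C V)) : PSubstS S C V K F :=
  ⟨combineO θ.tm τ, θ.kv⟩

/-- Executing the right-hand side of an AM rule abstractly, using a base
abstraction `β` for the semantic functions and abstract matching for
premises. -/
inductive ExecAbsRhs {S C V K F : Type}
    (β : F → List (ConfS S C V) → ConfS S C V → Prop) :
    PSubstS S C V K F → AmRhsS S C V K F → AStateS S C V K F → Prop where
  | ret {θ c Kp} : ExecAbsRhs β θ (.ret c Kp) ⟨ConfS.subst θ.tm c, CtxS.subst θ Kp⟩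
  | letSem {θ cret f args rest rr σr s} :
      β f (args.map (ConfS.subst θ.tm)) rr →
      AbsWitnessConf cret rr σr →
      ExecAbsRhs β (θ.combine σr) rest s →
      ExecAbsRhs β θ (.letSem cret f args rest) s

/-- One abstract rewriting step `⇒_β` by a particular rule. -/
def AbsStepBy {S C V K F : Type} (β : F → List (ConfS S C V) → ConfS S C V → Prop)
    (ru : AmRuleS S C V K F) (s s' : AStateS S C V K F) : Prop :=
  ∃ θA : PSubstS S C V K F, AbsWitnessState ru.lhs s θA ∧ ExecAbsRhs β θA ru.rhs s'

/-- One abstract rewriting step `s ⇒_β s'`. -/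
def AbsStep {S C V K F : Type} (M : MachineS S C V K F)
    (β : F → List (ConfS S C V) → ConfS S C V → Prop)
    (s s' : AStateS S C V K F) : Prop :=
  ∃ ru ∈ M.rules, AbsStepBy β ru s s'

/-- The set-extension (multiset/Dershowitz–Manna style) of `≺` on sets of
configurations: every element of `A` is below some element of `B`. -/
def DMLe {S C V : Type} (A B : Set (ConfS S C V)) : Prop :=
  ∀ a ∈ A, ∃ b ∈ B, ConfS.Prec a b

/-- `β` is a base abstraction for `M`: for each semantic function `f`,
`β(f)(cĀ) ⪰ ⋃ { f(c̄) | c̄ ∈ γ(cĀ) }`. -/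
def IsBaseAbs {S C V K F : Type} (M : MachineS S C V K F)
    (β : F → List (ConfS S C V) → ConfS S C V → Prop) : Prop :=
  ∀ f cAs, DMLe
    {r | ∃ cs, List.Forall₂ (fun c cA => ConfS.Concrete c ∧ ConfS.Prec c cA) cs cAs ∧
      M.sem f cs r}
    {r | β f cAs r}

/-! ### The nontermination-cutting relation and the abstraction preorder -/

/-- The nontermination-cutting relation `◁`.  `a ◁ ⟨(⋆_Val, ⊤) | K'⟩` for `K'`
a subcontext of `a`'s context, when every concrete execution starting below
`a` either keeps `a`'s context on the stack or passes through a value with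
`a`'s context. -/
def NontermCut {S C V K F : Type} (M : MachineS S C V K F)
    (a b : AStateS S C V K F) : Prop :=
  ∃ (K' : CtxS S C V K F) (T : TmS S C V), T.IsTop ∧ CtxS.Subctx K' a.ctx ∧
    b = ⟨⟨.star .Val, T⟩, K'⟩ ∧
    ∀ s : AStateS S C V K F, s.Concrete → AStateS.Prec s a →
      ∀ l : List (AStateS S C V K F), l.Chain' (ConcStep M) → l.head? = some s →
        ∀ s', l.getLast? = some s' →
          (CtxS.Subctx s.ctx s'.ctx ∨
            ∃ pre, pre <+: l ∧ ∃ s'', pre.getLast? = some s'' ∧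
              s''.ctx = s.ctx ∧ TmS.Prec s''.conf.tm (.star .Val))

/-- The abstraction preorder `⊑` on abstract machine states. -/
inductive Sqsub {S C V K F : Type} (M : MachineS S C V K F)
    (β : F → List (ConfS S C V) → ConfS S C V → Prop) :
    AStateS S C V K F → AStateS S C V K F → Prop where
  | refl {a} : Sqsub M β a a
  | prec {a c b} : AStateS.Prec a c → Sqsub M β c b → Sqsub M β a b
  | cut {a c b} : NontermCut M a c → Sqsub M β c b → Sqsub M β a b
  | steps {a b} : (∀ c, AbsStep M β a c → Sqsub M β c b) → Sqsub M β a b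

/-- A machine abstraction `(α, β)`: an upper closure operator `α` for the `⊑`
ordering, together with its base abstraction `β`. -/
structure MachineAbs {S C V K F : Type} (M : MachineS S C V K F)
    (β : F → List (ConfS S C V) → ConfS S C V → Prop) : Type where
  α : AStateS S C V K F → AStateS S C V K F
  mono : ∀ a b, Sqsub M β a b → Sqsub M β (α a) (α b)
  le : ∀ a, Sqsub M β a (α a)
  idem : ∀ a, α (α a) = α a

/-- The abstract transition relation `⇒_α`: an abstract rewriting step whose
result is closed under `α`. -/
def AbsStepAlpha {S C V K F : Type} (M : MachineS S C V K F)
    (β : F → List (ConfS S C V) → ConfS S C V → Prop)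
    (α : AStateS S C V K F → AStateS S C V K F)
    (a g : AStateS S C V K F) : Prop :=
  ∃ b, AbsStep M β a b ∧ g = α b

/-! ### Narrowing -/

/-- Composition of substitutions: apply `θ`, then `ρ`. -/
def PSubstS.comp {S C V K F : Type} (θ ρ : PSubstS S C V K F) : PSubstS S C V K F :=
  ⟨fun v => match θ.tm v with
    | some t => some (t.subst ρ.tm)
    | none => ρ.tm v,
   fun k => match θ.kv k with
    | some Kc => some (Kc.subst ρ)
    | none => ρ.kv k⟩

/-- Executing the right-hand side of an AM rule in narrowing mode: witnesses
for premises are computed by unification. -/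
inductive ExecNarrowRhs {S C V K F : Type}
    (β : F → List (ConfS S C V) → ConfS S C V → Prop) :
    PSubstS S C V K F → AmRhsS S C V K F → AStateS S C V K F → Prop where
  | ret {θ c Kp} : ExecNarrowRhs β θ (.ret c Kp) ⟨ConfS.subst θ.tm c, CtxS.subst θ Kp⟩
  | letSem {θ cret f args rest rr ρ s} :
      β f (args.map (ConfS.subst θ.tm)) rr →
      ConfS.subst ρ.tm (ConfS.subst θ.tm cret) = ConfS.subst ρ.tm rr →
      ExecNarrowRhs β (θ.comp ρ) rest s →
      ExecNarrowRhs β θ (.letSem cret f args rest) s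

/-- One narrowing step `↝_β` by a particular rule: the rule's left-hand side
and the state unify, and the (substituted) right-hand side is produced. -/
def NarrowStepBy {S C V K F : Type} (β : F → List (ConfS S C V) → ConfS S C V → Prop)
    (ru : AmRuleS S C V K F) (s s' : AStateS S C V K F) : Prop :=
  ∃ θ : PSubstS S C V K F,
    AStateS.subst θ ru.lhs = AStateS.subst θ s ∧
    MTOkO θ.tm ru.lhs.OccMT ∧ MTOkO θ.tm s.OccMT ∧
    ExecNarrowRhs β θ ru.rhs s'

/-- One narrowing step `s ↝_β s'`. -/
def NarrowStep {S C V K F : Type} (M : MachineS S C V K F)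
    (β : F → List (ConfS S C V) → ConfS S C V → Prop)
    (s s' : AStateS S C V K F) : Prop :=
  ∃ ru ∈ M.rules, NarrowStepBy β ru s s'

/-- The narrowing analogue `↝_α` of the abstract transition relation. -/
def NarrowAlpha {S C V K F : Type} (M : MachineS S C V K F)
    (β : F → List (ConfS S C V) → ConfS S C V → Prop)
    (α : AStateS S C V K F → AStateS S C V K F)
    (a g : AStateS S C V K F) : Prop :=
  ∃ b, NarrowStep M β a b ∧ g = α b

/-! ### Graph patterns -/

/-- The start state of the graph pattern for node type `N` of arity `n`:
`⟨(N(x̄_NonVal), ⊤) | k⟩` with fresh nonvalue variables `x̄` and a fresh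
context variable `κ`. -/
def gpStart {S C V K F : Type} (N : S) (n : ℕ) (x : ℕ → V) (κ : K) : AStateS S C V K F :=
  ⟨⟨.nonval N ((List.range n).map fun i => .pvar (x i) .NonVal), .star .All⟩, .kvar κ⟩

/-- A state of the form `⟨(e_NonVal, μ) | K⟩` which focuses an unknown
nonvalue subterm. -/
def IsEvalVarState {S C V K F : Type} (s : AStateS S C V K F) : Prop :=
  ∃ (v : V) (μ : TmS S C V) (Kc : CtxS S C V K F), s = ⟨⟨.pvar v .NonVal, μ⟩, Kc⟩

/-- The target `⟨(⋆_Val, ⊤) | K⟩` of a transitive edge. -/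
def transTarget {S C V K F : Type} (s : AStateS S C V K F) : AStateS S C V K F :=
  ⟨⟨.star .Val, .star .All⟩, s.ctx⟩

/-- A halting state `⟨(v, μ) | k⟩`, where `v` is a value and `k` is the
original context variable. -/
def IsHaltState {S C V K F : Type} (κ : K) (s : AStateS S C V K F) : Prop :=
  ∃ (v μ : TmS S C V), v.isValLike ∧ s = ⟨⟨v, μ⟩, .kvar κ⟩

/-- The nodes of the graph pattern for node type `N` under abstraction `α`:
generated by `↝_α` from the start state, adding a transitive edge to
`⟨(⋆_Val, ⊤) | K⟩` at any state focusing an unknown nonvalue subterm, and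
halting at value states with the original context variable. -/
inductive GPNode {S C V K F : Type} (M : MachineS S C V K F)
    (β : F → List (ConfS S C V) → ConfS S C V → Prop)
    (α : AStateS S C V K F → AStateS S C V K F)
    (N : S) (n : ℕ) (x : ℕ → V) (κ : K) : AStateS S C V K F → Prop where
  | start : GPNode M β α N n x κ (gpStart N n x κ)
  | narrow {s s'} : GPNode M β α N n x κ s → ¬ IsEvalVarState s → ¬ IsHaltState κ s →
      NarrowAlpha M β α s s' → GPNode M β α N n x κ s'
  | transEdge {s} : GPNode M β α N n x κ s → IsEvalVarState s →
      GPNode M β α N n x κ (transTarget s)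

/-- The edges of the graph pattern: narrowing edges and transitive edges. -/
def GPEdge {S C V K F : Type} (M : MachineS S C V K F)
    (β : F → List (ConfS S C V) → ConfS S C V → Prop)
    (α : AStateS S C V K F → AStateS S C V K F)
    (N : S) (n : ℕ) (x : ℕ → V) (κ : K) (s s' : AStateS S C V K F) : Prop :=
  GPNode M β α N n x κ s ∧
  ((¬ IsEvalVarState s ∧ ¬ IsHaltState κ s ∧ NarrowAlpha M β α s s') ∨
   (IsEvalVarState s ∧ s' = transTarget s))

/-! ### CFG fragments -/

/-- The node set of the weak hammock of the graph with edge relation `E`,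
entry node `n`, and exit node set `T`: the least fixed point of following
edges from `n` without continuing past `T`. -/
inductive Hammock {σ : Type} (E : σ → σ → Prop) (n : σ) (T : Set σ) : σ → Prop where
  | start : Hammock E n T n
  | step {m m'} : Hammock E n T m → m ∉ T → E m m' → Hammock E n T m'

/-- The exit set of the CFG fragment for `s`: states other than `s` whose
stack length does not exceed that of `s`. -/
def Exits {S C V K F : Type} (s : AStateS S C V K F) : Set (AStateS S C V K F) :=
  {t | t ≠ s ∧ t.stacklen ≤ s.stacklen}

/-- `e` is a nonvalue child of the term `t`. -/
def NonvalChild {S C V : Type} (t e : TmS S C V) : Prop :=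
  ∃ s0 ts, t = TmS.nonval s0 ts ∧ e ∈ ts ∧ e.isNonvalLike

/-- The edges of the CFG fragment for the state `st` in the abstract
transition graph of `⇒_α`: edges of the weak hammock bounded by `st` and its
exit set, minus (recursively) the edges of the CFG fragments of states
focusing the nonvalue children of `st`'s term. -/
def FragEdge {S C V K F : Type} (M : MachineS S C V K F)
    (β : F → List (ConfS S C V) → ConfS S C V → Prop)
    (α : AStateS S C V K F → AStateS S C V K F)
    (st a b : AStateS S C V K F) : Prop :=
  Hammock (AbsStepAlpha M β α) st (Exits st) a ∧
  a ∉ Exits st ∧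
  AbsStepAlpha M β α a b ∧
  ∀ e : TmS S C V, NonvalChild st.conf.tm e →
    ∀ (μ' : TmS S C V) (K' : CtxS S C V K F),
      Hammock (AbsStepAlpha M β α) st (Exits st) ⟨⟨e, μ'⟩, K'⟩ →
        ¬ FragEdge M β α ⟨⟨e, μ'⟩, K'⟩ a b
  termination_by sizeOf st.conf.tm
  decreasing_by
    rename_i h _
    obtain ⟨s0, ts, hts, he, -⟩ := h
    have := List.sizeOf_lt_of_mem he
    simp only [hts]
    simp only [TmS.nonval.sizeOf_spec]
    omega

/-- The nodes of the CFG fragment for `st`: hammock nodes reachable from `st`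
or reaching an exit via fragment edges. -/
def FragNode {S C V K F : Type} (M : MachineS S C V K F)
    (β : F → List (ConfS S C V) → ConfS S C V → Prop)
    (α : AStateS S C V K F → AStateS S C V K F)
    (st v : AStateS S C V K F) : Prop :=
  Hammock (AbsStepAlpha M β α) st (Exits st) v ∧
  (Relation.ReflTransGen (FragEdge M β α st) st v ∨
    ∃ t ∈ Exits st, Relation.ReflTransGen (FragEdge M β α st) v t)

/-! ### Technical assumptions on abstractions -/

/-- `θ'` extends `θ`. -/
def PExtends {S C V K F : Type} (θ θ' : PSubstS S C V K F) : Prop :=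
  (∀ v t, θ.tm v = some t → θ'.tm v = some t) ∧
  (∀ k Kc, θ.kv k = some Kc → θ'.kv k = some Kc)

/-- The `⊑` ordering with all intermediate states of stack length at least
`n`. -/
inductive SqsubAbove {S C V K F : Type} (M : MachineS S C V K F)
    (β : F → List (ConfS S C V) → ConfS S C V → Prop) (n : ℕ) :
    AStateS S C V K F → AStateS S C V K F → Prop where
  | refl {a} : SqsubAbove M β n a a
  | prec {a c b} : n ≤ c.stacklen → AStateS.Prec a c → SqsubAbove M β n c b →
      SqsubAbove M β n a b
  | cut {a c b} : n ≤ c.stacklen → NontermCut M a c → SqsubAbove M β n c b →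
      SqsubAbove M β n a b
  | steps {a b} : (∀ c, AbsStep M β a c → n ≤ c.stacklen) →
      (∀ c, AbsStep M β a c → SqsubAbove M β n c b) →
      SqsubAbove M β n a b

end AbsRW

namespace AbsRW

section Aux

variable {S C V : Type}

lemma zip_forall {α β : Type} {l : List α} {l' : List β} {P : α → β → Prop}
    (h : ∀ i (hi : i < l.length) (hi' : i < l'.length), P (l[i]'hi) (l'[i]'hi')) :
    ∀ p ∈ l.zip l', P p.1 p.2 := by
  intro p hp
  obtain ⟨i, hi, rfl⟩ := List.mem_iff_getElem.1 hp
  have hi1 : i < l.length := by simp [List.length_zip] at hi; omega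
  have hi2 : i < l'.length := by simp [List.length_zip] at hi; omega
  rw [List.getElem_zip]
  exact h i hi1 hi2

lemma forall_of_zip {α β : Type} {l : List α} {l' : List β} {P : α → β → Prop}
    (h : ∀ p ∈ l.zip l', P p.1 p.2)
    (i : ℕ) (hi : i < l.length) (hi' : i < l'.length) : P (l[i]'hi) (l'[i]'hi') := by
  have hm : (l[i]'hi, l'[i]'hi') ∈ l.zip l' := by
    have : i < (l.zip l').length := by simp [List.length_zip]; omega
    have := List.getElem_mem this
    rwa [List.getElem_zip] at this
  exact h _ hm

namespace TmS

/-- Structural characterization of `Prec`. -/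
inductive PrecS : TmS S C V → TmS S C V → Prop where
  | nonval {s ts ts'} : ts.length = ts'.length →
      (∀ p ∈ ts.zip ts', PrecS p.1 p.2) → PrecS (.nonval s ts) (.nonval s ts')
  | val {s ts ts'} : ts.length = ts'.length →
      (∀ p ∈ ts.zip ts', PrecS p.1 p.2) → PrecS (.val s ts) (.val s ts')
  | const {c} : PrecS (.const c) (.const c)
  | pvar {v mt} : PrecS (.pvar v mt) (.pvar v mt)
  | star {mt} : PrecS (.star mt) (.star mt)
  | nonvalStar {s ts} : PrecS (.nonval s ts) (.star .NonVal)
  | valStar {s ts} : PrecS (.val s ts) (.star .Val)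
  | allStar {t} : PrecS t (.star .All)

lemma precS_refl (t : TmS S C V) : PrecS t t := by
  suffices H : ∀ n, ∀ t : TmS S C V, sizeOf t = n → PrecS t t from H _ t rfl
  intro n
  induction n using Nat.strong_induction_on with
  | _ n IH =>
  intro t hn
  subst hn
  cases t with
  | nonval s ts =>
      refine .nonval rfl (zip_forall fun i hi hi' => IH _ ?_ _ rfl)
      have := List.sizeOf_lt_of_mem (List.getElem_mem hi)
      simp only [TmS.nonval.sizeOf_spec]; omega
  | val s ts =>
      refine .val rfl (zip_forall fun i hi hi' => IH _ ?_ _ rfl)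
      have := List.sizeOf_lt_of_mem (List.getElem_mem hi)
      simp only [TmS.val.sizeOf_spec]; omega
  | const c => exact .const
  | pvar v mt => exact .pvar
  | star mt => exact .star

lemma precS_trans (a b c : TmS S C V) (hab : PrecS a b) (hbc : PrecS b c) :
    PrecS a c := by
  suffices H : ∀ n, ∀ a b c : TmS S C V, PrecS a b → PrecS b c → sizeOf a = n →
      PrecS a c from H _ a b c hab hbc rfl
  clear hab hbc a b c
  intro n
  induction n using Nat.strong_induction_on with
  | _ n IH =>
  intro a b c hab hbc hs
  subst hs
  cases hbc with
  | nonval hlen2 hp2 =>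
      cases hab with
      | nonval hlen1 hp1 =>
          refine .nonval (hlen1.trans hlen2) (zip_forall fun i hi hi' => ?_)
          have h1 := forall_of_zip hp1 i hi (by omega)
          have h2 := forall_of_zip hp2 i (by omega) hi'
          refine IH _ ?_ _ _ _ h1 h2 rfl
          have := List.sizeOf_lt_of_mem (List.getElem_mem hi)
          simp only [TmS.nonval.sizeOf_spec]; omega
  | val hlen2 hp2 =>
      cases hab with
      | val hlen1 hp1 =>
          refine .val (hlen1.trans hlen2) (zip_forall fun i hi hi' => ?_)
          have h1 := forall_of_zip hp1 i hi (by omega)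
          have h2 := forall_of_zip hp2 i (by omega) hi'
          refine IH _ ?_ _ _ _ h1 h2 rfl
          have := List.sizeOf_lt_of_mem (List.getElem_mem hi)
          simp only [TmS.val.sizeOf_spec]; omega
  | const => exact hab
  | pvar => exact hab
  | star => exact hab
  | nonvalStar => cases hab with
      | nonval hlen1 hp1 => exact .nonvalStar
  | valStar => cases hab with
      | val hlen1 hp1 => exact .valStar
  | allStar => exact .allStar

lemma prec_of_precS {a b : TmS S C V} (h : PrecS a b) : Prec a b := by
  suffices H : ∀ n, ∀ a b : TmS S C V, PrecS a b → sizeOf a = n → Prec a b from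
    H _ a b h rfl
  clear h a b
  intro n
  induction n using Nat.strong_induction_on with
  | _ n IH =>
  intro a b h hs
  subst hs
  cases h with
  | nonval hlen hp =>
      refine Prec.nonvalCongr hlen (zip_forall fun i hi hi' => ?_)
      refine IH _ ?_ _ _ (forall_of_zip hp i hi hi') rfl
      have := List.sizeOf_lt_of_mem (List.getElem_mem hi)
      simp only [TmS.nonval.sizeOf_spec]; omega
  | val hlen hp =>
      refine Prec.valCongr hlen (zip_forall fun i hi hi' => ?_)
      refine IH _ ?_ _ _ (forall_of_zip hp i hi hi') rfl
      have := List.sizeOf_lt_of_mem (List.getElem_mem hi)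
      simp only [TmS.val.sizeOf_spec]; omega
  | const => exact Prec.refl
  | pvar => exact Prec.refl
  | star => exact Prec.refl
  | nonvalStar => exact Prec.starNonVal
  | valStar => exact Prec.starVal
  | allStar => exact Prec.starAll

lemma precS_of_prec {a b : TmS S C V} (h : Prec a b) : PrecS a b := by
  induction h with
  | refl => exact precS_refl _
  | trans h1 h2 ih1 ih2 => exact precS_trans _ _ _ ih1 ih2
  | nonvalCongr hlen hp ih => exact .nonval hlen ih
  | valCongr hlen hp ih => exact .val hlen ih
  | starNonVal => exact .nonvalStar
  | starVal => exact .valStar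
  | starAll => exact .allStar

lemma prec_iff_precS {a b : TmS S C V} : Prec a b ↔ PrecS a b :=
  ⟨precS_of_prec, prec_of_precS⟩

/-- A measure that strictly decreases when going strictly up in `≺`. -/
def mea : TmS S C V → ℕ
  | .nonval _ ts => 2 + (ts.attach.map fun x => mea x.1).sum
  | .val _ ts => 2 + (ts.attach.map fun x => mea x.1).sum
  | .const _ => 2
  | .pvar _ _ => 2
  | .star .All => 0
  | .star .Val => 1
  | .star .NonVal => 1
  decreasing_by
    all_goals
      simp_wf
      have := List.sizeOf_lt_of_mem x.2
      omega

lemma mea_nonval (s : S) (ts : List (TmS S C V)) :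
    mea (.nonval s ts) = 2 + (ts.map mea).sum := by
  rw [mea]
  congr 1
  rw [← List.attach_map_val (l := ts) (f := mea)]

lemma mea_val (s : S) (ts : List (TmS S C V)) :
    mea (.val s ts) = 2 + (ts.map mea).sum := by
  rw [mea]
  congr 1
  rw [← List.attach_map_val (l := ts) (f := mea)]

lemma mea_eq_zero {t : TmS S C V} (h : mea t = 0) : t = .star .All := by
  cases t with
  | nonval s ts => rw [mea_nonval] at h; omega
  | val s ts => rw [mea_val] at h; omega
  | const c => simp [mea] at h
  | pvar v mt => simp [mea] at h
  | star mt => cases mt <;> simp [mea] at h <;> rfl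

lemma list_mea_mono : ∀ (l l' : List (TmS S C V)), l.length = l'.length →
    (∀ i (hi : i < l.length) (hi' : i < l'.length),
      mea (l'[i]'hi') ≤ mea (l[i]'hi) ∧ (mea (l'[i]'hi') = mea (l[i]'hi) → l[i]'hi = l'[i]'hi')) →
    (l'.map mea).sum ≤ (l.map mea).sum ∧
      ((l'.map mea).sum = (l.map mea).sum → l = l') := by
  intro l
  induction l with
  | nil =>
      intro l' hlen _
      cases l' with
      | nil => simp
      | cons b bs => simp at hlen
  | cons a as ih =>
      intro l' hlen h
      cases l' with
      | nil => simp at hlen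
      | cons b bs =>
          simp only [List.map_cons, List.sum_cons]
          have h0 := h 0 (by simp) (by simp)
          simp only [List.getElem_cons_zero] at h0
          have ht := ih bs (by simpa using hlen)
            (fun i hi hi' => by
              have := h (i+1) (by simpa using Nat.succ_lt_succ hi)
                (by simpa using Nat.succ_lt_succ hi')
              simpa using this)
          constructor
          · exact Nat.add_le_add h0.1 ht.1
          · intro he
            have hb : mea b = mea a := by omega
            have hs : (bs.map mea).sum = (as.map mea).sum := by omega
            rw [h0.2 hb, ht.2 hs]

lemma mea_mono (a b : TmS S C V) (h : PrecS a b) :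
    mea b ≤ mea a ∧ (mea b = mea a → a = b) := by
  suffices H : ∀ n, ∀ a b : TmS S C V, PrecS a b → sizeOf a = n →
      mea b ≤ mea a ∧ (mea b = mea a → a = b) from H _ a b h rfl
  clear h a b
  intro n
  induction n using Nat.strong_induction_on with
  | _ n IH =>
  intro a b h hs
  subst hs
  cases h with
  | @nonval s ts ts' hlen hp =>
      have key := list_mea_mono ts ts' hlen (fun i hi hi' => by
        refine IH _ ?_ _ _ (forall_of_zip hp i hi hi') rfl
        have := List.sizeOf_lt_of_mem (List.getElem_mem hi)
        simp only [TmS.nonval.sizeOf_spec]; omega)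
      rw [mea_nonval, mea_nonval]
      exact ⟨by omega, fun he => by rw [key.2 (by omega)]⟩
  | @val s ts ts' hlen hp =>
      have key := list_mea_mono ts ts' hlen (fun i hi hi' => by
        refine IH _ ?_ _ _ (forall_of_zip hp i hi hi') rfl
        have := List.sizeOf_lt_of_mem (List.getElem_mem hi)
        simp only [TmS.val.sizeOf_spec]; omega)
      rw [mea_val, mea_val]
      exact ⟨by omega, fun he => by rw [key.2 (by omega)]⟩
  | const => exact ⟨le_refl _, fun _ => rfl⟩
  | pvar => exact ⟨le_refl _, fun _ => rfl⟩
  | star => exact ⟨le_refl _, fun _ => rfl⟩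
  | nonvalStar => rw [mea_nonval]; simp only [mea]; omega
  | valStar => rw [mea_val]; simp only [mea]; omega
  | allStar =>
      refine ⟨by simp [mea], fun he => ?_⟩
      have : mea a = 0 := by simpa [mea] using he.symm
      rw [mea_eq_zero this]

/-- Binary (conditional) meets of upper bounds. -/
lemma exists_meet (u w x : TmS S C V) (hxu : PrecS x u) (hxw : PrecS x w) :
    ∃ z, PrecS z u ∧ PrecS z w ∧ ∀ y, PrecS y u → PrecS y w → PrecS y z := by
  suffices H : ∀ n, ∀ u w x : TmS S C V, PrecS x u → PrecS x w → sizeOf u = n →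
      ∃ z, PrecS z u ∧ PrecS z w ∧ ∀ y, PrecS y u → PrecS y w → PrecS y z from
    H _ u w x hxu hxw rfl
  clear hxu hxw u w x
  intro n
  induction n using Nat.strong_induction_on with
  | _ n IH =>
  intro u w x hxu hxw hs
  subst hs
  cases hxu with
  | @nonval s ts ts1 hlen1 hp1 =>
      cases hxw with
      | @nonval _ _ ts2 hlen2 hp2 =>
          -- u = nonval s ts1, w = nonval s ts2
          have hl12 : ts1.length = ts2.length := by omega
          have H : ∀ i (hi : i < ts1.length), ∃ z,
              PrecS z (ts1[i]'hi) ∧ PrecS z (ts2[i]'(hl12 ▸ hi)) ∧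
              ∀ y, PrecS y (ts1[i]'hi) → PrecS y (ts2[i]'(hl12 ▸ hi)) → PrecS y z := by
            intro i hi
            have h1 := forall_of_zip hp1 i (by omega) hi
            have h2 := forall_of_zip hp2 i (by omega) (by omega)
            refine IH _ ?_ _ _ _ h1 h2 rfl
            have := List.sizeOf_lt_of_mem (List.getElem_mem hi)
            simp only [TmS.nonval.sizeOf_spec]; omega
          choose f hf1 hf2 hf3 using H
          refine ⟨.nonval s (List.ofFn fun i : Fin ts1.length => f i i.2), ?_, ?_, ?_⟩
          · refine .nonval (by simp) (zip_forall fun i hi hi' => ?_)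
            simp only [List.getElem_ofFn]
            exact hf1 _ _
          · refine .nonval (by simp; omega) (zip_forall fun i hi hi' => ?_)
            simp only [List.getElem_ofFn]
            exact hf2 _ _
          · intro y hyu hyw
            cases hyu with
            | @nonval _ ys _ hleny hpy =>
                cases hyw with
                | nonval hleny2 hpy2 =>
                    refine .nonval (by simp; omega) (zip_forall fun i hi hi' => ?_)
                    simp only [List.getElem_ofFn]
                    exact hf3 _ _ _ (forall_of_zip hpy i hi (by omega))
                      (forall_of_zip hpy2 i hi (by omega))
      | nonvalStar =>
          exact ⟨_, precS_refl _, .nonvalStar, fun y hyu _ => hyu⟩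
      | allStar =>
          exact ⟨_, precS_refl _, .allStar, fun y hyu _ => hyu⟩
  | @val s ts ts1 hlen1 hp1 =>
      cases hxw with
      | @val _ _ ts2 hlen2 hp2 =>
          have hl12 : ts1.length = ts2.length := by omega
          have H : ∀ i (hi : i < ts1.length), ∃ z,
              PrecS z (ts1[i]'hi) ∧ PrecS z (ts2[i]'(hl12 ▸ hi)) ∧
              ∀ y, PrecS y (ts1[i]'hi) → PrecS y (ts2[i]'(hl12 ▸ hi)) → PrecS y z := by
            intro i hi
            have h1 := forall_of_zip hp1 i (by omega) hi
            have h2 := forall_of_zip hp2 i (by omega) (by omega)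
            refine IH _ ?_ _ _ _ h1 h2 rfl
            have := List.sizeOf_lt_of_mem (List.getElem_mem hi)
            simp only [TmS.val.sizeOf_spec]; omega
          choose f hf1 hf2 hf3 using H
          refine ⟨.val s (List.ofFn fun i : Fin ts1.length => f i i.2), ?_, ?_, ?_⟩
          · refine .val (by simp) (zip_forall fun i hi hi' => ?_)
            simp only [List.getElem_ofFn]
            exact hf1 _ _
          · refine .val (by simp; omega) (zip_forall fun i hi hi' => ?_)
            simp only [List.getElem_ofFn]
            exact hf2 _ _
          · intro y hyu hyw
            cases hyu with
            | @val _ ys _ hleny hpy =>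
                cases hyw with
                | val hleny2 hpy2 =>
                    refine .val (by simp; omega) (zip_forall fun i hi hi' => ?_)
                    simp only [List.getElem_ofFn]
                    exact hf3 _ _ _ (forall_of_zip hpy i hi (by omega))
                      (forall_of_zip hpy2 i hi (by omega))
      | valStar =>
          exact ⟨_, precS_refl _, .valStar, fun y hyu _ => hyu⟩
      | allStar =>
          exact ⟨_, precS_refl _, .allStar, fun y hyu _ => hyu⟩
  | const => exact ⟨_, precS_refl _, hxw, fun y hyu _ => hyu⟩
  | pvar => exact ⟨_, precS_refl _, hxw, fun y hyu _ => hyu⟩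
  | star => exact ⟨_, precS_refl _, hxw, fun y hyu _ => hyu⟩
  | nonvalStar =>
      -- u = star NonVal, x = nonval s ts
      cases hxw with
      | nonval hlen hp => exact ⟨_, .nonvalStar, precS_refl _, fun y _ hyw => hyw⟩
      | nonvalStar => exact ⟨_, precS_refl _, precS_refl _, fun y hyu _ => hyu⟩
      | allStar => exact ⟨_, precS_refl _, .allStar, fun y hyu _ => hyu⟩
  | valStar =>
      cases hxw with
      | val hlen hp => exact ⟨_, .valStar, precS_refl _, fun y _ hyw => hyw⟩
      | valStar => exact ⟨_, precS_refl _, precS_refl _, fun y hyu _ => hyu⟩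
      | allStar => exact ⟨_, precS_refl _, .allStar, fun y hyu _ => hyu⟩
  | allStar =>
      exact ⟨_, .allStar, precS_refl _, fun y _ hyw => hyw⟩

end TmS

lemma nat_exists_greatest {P : ℕ → Prop} (h : ∃ n, P n) (b : ℕ)
    (hb : ∀ n, P n → n ≤ b) : ∃ m, P m ∧ ∀ k, P k → k ≤ m := by
  classical
  induction b with
  | zero =>
      obtain ⟨n, hn⟩ := h
      exact ⟨n, hn, fun k hk => by have h1 := hb k hk; have h2 := hb n hn; omega⟩
  | succ b ih =>
      by_cases hPb : P (b + 1)
      · exact ⟨b + 1, hPb, hb⟩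
      · refine ih fun n hn => ?_
        have h1 := hb n hn
        have h2 : n ≠ b + 1 := fun he => hPb (he ▸ hn)
        omega

open TmS in
/-- Every nonempty set of terms has a least upper bound with respect to `≺`. -/
lemma exists_isLubT (A : Set (TmS S C V)) (hA : A.Nonempty) : ∃ u, IsLubT A u := by
  classical
  obtain ⟨x, hx⟩ := hA
  -- upper bounds, measured
  have hub : ∃ n, ∃ u, (∀ a ∈ A, PrecS a u) ∧ mea u = n :=
    ⟨mea (.star .All), .star .All, fun a _ => .allStar, rfl⟩
  have hbdd : ∀ n, (∃ u, (∀ a ∈ A, PrecS a u) ∧ mea u = n) → n ≤ mea x := by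
    rintro n ⟨u, hu, rfl⟩
    exact (mea_mono _ _ (hu x hx)).1
  obtain ⟨n, ⟨u, hu, hmu⟩, hmax⟩ := nat_exists_greatest hub (mea x) hbdd
  refine ⟨u, fun a ha => prec_of_precS (hu a ha), ?_⟩
  intro w hw
  have hw' : ∀ a ∈ A, PrecS a w := fun a ha => precS_of_prec (hw a ha)
  obtain ⟨z, hzu, hzw, hz⟩ := exists_meet u w x (hu x hx) (hw' x hx)
  have hzub : ∀ a ∈ A, PrecS a z := fun a ha => hz a (hu a ha) (hw' a ha)
  have h1 : mea z ≤ n := hmax _ ⟨z, hzub, rfl⟩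
  have h2 := mea_mono z u hzu
  have : z = u := h2.2 (by omega)
  subst this
  exact prec_of_precS hzw

open TmS in
lemma subst_mono (σ σ' : V → Option (TmS S C V))
    (h : ∀ v, (σ v = none ∧ σ' v = none) ∨
      ∃ u u', σ v = some u ∧ σ' v = some u' ∧ Prec u u') :
    ∀ p : TmS S C V, Prec (p.subst σ) (p.subst σ') := by
  suffices H : ∀ n, ∀ p : TmS S C V, sizeOf p = n → Prec (p.subst σ) (p.subst σ') from
    fun p => H _ p rfl
  intro n
  induction n using Nat.strong_induction_on with
  | _ n IH =>
  intro p hs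
  subst hs
  cases p with
  | nonval s ts =>
      rw [TmS.subst, TmS.subst]
      refine Prec.nonvalCongr (by simp) ?_
      rw [List.zip_map']
      intro q hq
      simp only [List.mem_map] at hq
      obtain ⟨x, hxmem, rfl⟩ := hq
      refine IH _ ?_ _ rfl
      have := List.sizeOf_lt_of_mem x.2
      simp only [TmS.nonval.sizeOf_spec]; omega
  | val s ts =>
      rw [TmS.subst, TmS.subst]
      refine Prec.valCongr (by simp) ?_
      rw [List.zip_map']
      intro q hq
      simp only [List.mem_map] at hq
      obtain ⟨x, hxmem, rfl⟩ := hq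
      refine IH _ ?_ _ rfl
      have := List.sizeOf_lt_of_mem x.2
      simp only [TmS.val.sizeOf_spec]; omega
  | const c => rw [TmS.subst, TmS.subst]; exact Prec.refl
  | pvar v mt =>
      rw [TmS.subst, TmS.subst]
      rcases h v with ⟨h1, h2⟩ | ⟨u, u', h1, h2, h3⟩
      · rw [h1, h2]; exact Prec.refl
      · rw [h1, h2]; exact h3
  | star mt => rw [TmS.subst, TmS.subst]; exact Prec.refl

end Aux

/-- **Abstract Matching Property for terms.** If the pattern
`tp` matches the concrete term `t` via `σ`, and `t ≺ t'`, then `t'`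
abstractly matches `tp` with a witness `σ'` of the same domain as `σ`,
pointwise above `σ`, and with `t ≺ σ'(tp)`. -/
theorem abstract_matching_property {S C V : Type}
    (tp t t' : TmS S C V) (σ : V → Option (TmS S C V))
    (hmatch : ConcMatchTm σ tp t) (hprec : TmS.Prec t t') :
    ∃ σ' : V → Option (TmS S C V),
      AbsWitnessTm tp t' σ' ∧
      (∀ v, (σ v).isSome ↔ (σ' v).isSome) ∧
      (∀ v u u', σ v = some u → σ' v = some u' → TmS.Prec u u') ∧
      TmS.Prec t (TmS.subst σ' tp) := by
  classical
  set A : V → Set (TmS S C V) := fun v =>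
    {u | ∃ t0 σ0, TmS.Prec t0 t' ∧ ConcMatchTm σ0 tp t0 ∧ σ0 v = some u} with hA
  have hmem : ∀ v u, σ v = some u → u ∈ A v := fun v u h => ⟨t, σ, hprec, hmatch, h⟩
  have hempty : ∀ v, σ v = none → ¬ (A v).Nonempty := by
    rintro v hv ⟨u, t0, σ0, h1, h2, h3⟩
    have hocc : ∃ mt, tp.OccMT v mt := (h2.2.2.1 v).1 (by rw [h3]; rfl)
    have hsome : (σ v).isSome := (hmatch.2.2.1 v).2 hocc
    rw [hv] at hsome
    simp at hsome
  set σ' : V → Option (TmS S C V) := fun v =>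
    if h : (A v).Nonempty then some (exists_isLubT _ h).choose else none with hσ'
  have hrel : ∀ v, (σ v = none ∧ σ' v = none) ∨
      ∃ u u', σ v = some u ∧ σ' v = some u' ∧ TmS.Prec u u' := by
    intro v
    cases hv : σ v with
    | none => exact Or.inl ⟨rfl, by rw [hσ']; exact dif_neg (hempty v hv)⟩
    | some u =>
        have hne : (A v).Nonempty := ⟨u, hmem v u hv⟩
        exact Or.inr ⟨u, _, rfl, by rw [hσ']; exact dif_pos hne,
          (exists_isLubT _ hne).choose_spec.1 u (hmem v u hv)⟩
  refine ⟨σ', ⟨⟨t, σ, hprec, hmatch⟩, ?_⟩, ?_, ?_, ?_⟩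
  · intro v
    by_cases h : (A v).Nonempty
    · exact Or.inr ⟨_, by rw [hσ']; exact dif_pos h, (exists_isLubT _ h).choose_spec⟩
    · exact Or.inl ⟨Set.not_nonempty_iff_eq_empty.mp h, by rw [hσ']; exact dif_neg h⟩
  · intro v
    rcases hrel v with ⟨h1, h2⟩ | ⟨u, u', h1, h2, h3⟩ <;> rw [h1, h2] <;> simp
  · intro v u u' hu hu'
    rcases hrel v with ⟨h1, h2⟩ | ⟨u0, u0', h1, h2, h3⟩
    · rw [h1] at hu; exact absurd hu (by simp)
    · rw [h1] at hu
      rw [h2] at hu'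
      obtain rfl := Option.some.inj hu
      obtain rfl := Option.some.inj hu'
      exact h3
  · have hmono := subst_mono σ σ' hrel tp
    rwa [hmatch.1] at hmono

end AbsRW
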